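/- Let H = P_1 P_2 ⋯ P_h be a tower of height h in a finite group G. Then for every 1 ≤ i ≤ h, the subgroup P_i is generated by the δ_{i-1}*-commutators of G contained in P_i. -/

import Mathlib

/-- The set of `δ_k*`-commutators of a group: every element is a
`δ_0*`-commutator; for `k ≥ 1`, an element is a `δ_k*`-commutator if it equals
`[a,b]` where `a` and `b` are powers of `δ_{k-1}*`-commutators and have
coprime orders. -/
def deltaStar (G : Type*) [Group G] : ℕ → Set G
  | 0 => Set.univ
  | k + 1 => {x : G | ∃ a b : G,
      (∃ c ∈ deltaStar G k, ∃ n : ℕ, a = c ^ n) ∧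
      (∃ c ∈ deltaStar G k, ∃ n : ℕ, b = c ^ n) ∧
      Nat.Coprime (orderOf a) (orderOf b) ∧
      x = a⁻¹ * b⁻¹ * a * b}

/-- Conjugation preserves order. -/
lemma orderOf_conj' {G : Type*} [Group G] (g x : G) :
    orderOf (g * x * g⁻¹) = orderOf x := by
  have := orderOf_injective (MulAut.conj g).toMonoidHom (MulEquiv.injective _) x
  simpa [MulAut.conj_apply] using this

/-- The set of `δ_k*`-commutators is invariant under conjugation. -/
lemma deltaStar_conj {G : Type*} [Group G] (k : ℕ) (g : G) :
    ∀ x ∈ deltaStar G k, g * x * g⁻¹ ∈ deltaStar G k := by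
  induction k with
  | zero => intro x _; trivial
  | succ k ih =>
    rintro x ⟨a, b, ⟨c, hc, n, rfl⟩, ⟨d, hd, m, rfl⟩, hcop, rfl⟩
    refine ⟨g * c ^ n * g⁻¹, g * d ^ m * g⁻¹,
      ⟨g * c * g⁻¹, ih c hc, n, conj_pow.symm⟩,
      ⟨g * d * g⁻¹, ih d hd, m, conj_pow.symm⟩, ?_, ?_⟩
    · rwa [orderOf_conj', orderOf_conj']
    · group

/-- In a group with all elements of finite order, the inverse is a power. -/
lemma inv_eq_pow_orderOf_sub_one {G : Type*} [Group G] (a : G) (h : 0 < orderOf a) :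
    a⁻¹ = a ^ (orderOf a - 1) := by
  obtain ⟨m, hm⟩ := Nat.exists_eq_succ_of_ne_zero h.ne'
  have h1 : a ^ orderOf a = 1 := pow_orderOf_eq_one a
  rw [hm, pow_succ] at h1
  rw [hm, Nat.succ_sub_one]
  exact inv_eq_of_mul_eq_one_left h1

/-- Elements of a `p`-subgroup have `p`-power order. -/
lemma pgroup_orderOf {G : Type*} [Group G] {p : ℕ} {P : Subgroup G} (hP : IsPGroup p P)
    (hp : p.Prime) {x : G} (hx : x ∈ P) : ∃ a : ℕ, orderOf x = p ^ a := by
  obtain ⟨n, hn⟩ := hP ⟨x, hx⟩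
  have hxn : x ^ p ^ n = 1 := by
    have := congrArg (Subgroup.subtype P) hn
    simpa using this
  obtain ⟨a, _, ha⟩ := (Nat.dvd_prime_pow hp).mp (orderOf_dvd_of_pow_eq_one hxn)
  exact ⟨a, ha⟩

/-- If `P` and `Q` are `p`-subgroups of a finite group for the same prime `p`,
`Q` normalizes `P` and `⁅P,Q⁆ = P`, then `P` is trivial. -/
lemma pgroup_tower_bot {G : Type*} [Group G] [Finite G] {p : ℕ} (hp : p.Prime)
    {P Q : Subgroup G} (hP : IsPGroup p P) (hQ : IsPGroup p Q)
    (hn : Q ≤ Subgroup.normalizer (P : Set G)) (hc : ⁅P, Q⁆ = P) : P = ⊥ := by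
  haveI : Fact p.Prime := ⟨hp⟩
  set R : Subgroup G := P ⊔ Q with hRdef
  have hPR : P ≤ R := le_sup_left
  have hQR : Q ≤ R := le_sup_right
  have hRp : IsPGroup p R := hP.to_sup_of_normal_left' hQ hn
  have hnil : Group.IsNilpotent ↥R := hRp.isNilpotent
  obtain ⟨n, hn0⟩ := nilpotent_iff_lowerCentralSeries.mp hnil
  set P' := P.subgroupOf R with hP'def
  set Q' := Q.subgroupOf R with hQ'def
  have hmapP : P'.map R.subtype = P := by
    rw [hP'def, Subgroup.subgroupOf_map_subtype, inf_eq_left.mpr hPR]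
  have hmapQ : Q'.map R.subtype = Q := by
    rw [hQ'def, Subgroup.subgroupOf_map_subtype, inf_eq_left.mpr hQR]
  have hinj : Function.Injective R.subtype := Subtype.coe_injective
  have hPQ' : ⁅P', Q'⁆ = P' := by
    apply Subgroup.map_injective hinj
    rw [Subgroup.map_commutator, hmapP, hmapQ, hc]
  have hlcs : ∀ m, P' ≤ Subgroup.lowerCentralSeries (⊤ : Subgroup ↥R) m := by
    intro m
    induction m with
    | zero => exact le_top
    | succ m ihm =>
      rw [Subgroup.lowerCentralSeries_succ]
      calc P' = ⁅P', Q'⁆ := hPQ'.symm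
        _ ≤ ⁅Subgroup.lowerCentralSeries (⊤ : Subgroup ↥R) m, ⊤⁆ := Subgroup.commutator_mono ihm le_top
  have hP'bot : P' = ⊥ := le_antisymm (hn0 ▸ hlcs n) bot_le
  rw [← hmapP, hP'bot, Subgroup.map_bot]

open scoped commutatorElement

/-- If `P_1 ⋯ P_h` is a tower of height `h` in a finite group `G` (here
zero-indexed as `P 0, …, P (h-1)`), then each `P_i` is generated by the
`δ_{i-1}*`-commutators it contains (zero-indexed: `P i` by the
`δ_i*`-commutators it contains). -/
theorem tower_subgroup_generated_by_deltaStar (G : Type*) [Group G] [Finite G]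
    (h : ℕ) (hh : 1 ≤ h) (P : Fin h → Subgroup G) (p : Fin h → ℕ)
    (hprime : ∀ i, (p i).Prime)
    (hp : ∀ i, IsPGroup (p i) (P i))
    (hnormalize : ∀ i j : Fin h, i < j → P i ≤ Subgroup.normalizer (P j : Set G))
    (hcomm : ∀ i j : Fin h, (j : ℕ) + 1 = (i : ℕ) → ⁅P i, P j⁆ = P i) :
    ∀ i : Fin h, P i = Subgroup.closure {x : G | x ∈ P i ∧ x ∈ deltaStar G (i : ℕ)} := by
  suffices H : ∀ k : ℕ, ∀ j : Fin h, k ≤ (j : ℕ) →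
      P j = Subgroup.closure {x : G | x ∈ P j ∧ x ∈ deltaStar G k} by
    intro i; exact H i i le_rfl
  intro k
  induction k with
  | zero =>
    intro j _
    have hset : {x : G | x ∈ P j ∧ x ∈ deltaStar G 0} = (P j : Set G) := by
      ext x
      simp only [Set.mem_setOf_eq, SetLike.mem_coe, and_iff_left_iff_imp]
      intro _
      exact Set.mem_univ x
    rw [hset, Subgroup.closure_eq]
  | succ k ih =>
    intro j hj
    have hj1 : 1 ≤ (j : ℕ) := le_trans (Nat.le_add_left 1 k) hj
    have hjlt : (j : ℕ) - 1 < h := lt_of_le_of_lt (Nat.sub_le _ _) j.isLt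
    set j' : Fin h := ⟨(j : ℕ) - 1, hjlt⟩ with hj'def
    have hsucc : (j' : ℕ) + 1 = (j : ℕ) := Nat.succ_pred_eq_of_pos hj1
    have hlt : j' < j := by
      rw [Fin.lt_def]
      omega
    have hcj : ⁅P j, P j'⁆ = P j := hcomm j j' hsucc
    by_cases hpe : p j = p j'
    · -- equal primes force `P j` to be trivial
      have hbot : P j = ⊥ :=
        pgroup_tower_bot (hprime j) (hp j) (hpe ▸ hp j') (hnormalize j' j hlt) hcj
      apply le_antisymm
      · rw [hbot]; exact bot_le
      · rw [Subgroup.closure_le]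
        intro x hx
        exact hx.1
    · set S : Set G := {x : G | x ∈ P j ∧ x ∈ deltaStar G (k + 1)} with hSdef
      set N : Subgroup G := Subgroup.closure S with hNdef
      have hNle : N ≤ P j := (Subgroup.closure_le _).mpr (fun x hx => hx.1)
      -- stability of N under conjugation by elements of the normalizer of `P j`
      have hstab : ∀ g ∈ Subgroup.normalizer (P j : Set G), ∀ x ∈ N, g * x * g⁻¹ ∈ N := by
        intro g hg x hx
        refine Subgroup.closure_induction (p := fun x _ => g * x * g⁻¹ ∈ N)
          ?_ ?_ ?_ ?_ hx
        · intro s hs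
          exact Subgroup.subset_closure
            ⟨(Subgroup.mem_normalizer_iff.mp hg s).mp hs.1, deltaStar_conj _ g s hs.2⟩
        · show g * 1 * g⁻¹ ∈ N
          have hone : g * 1 * g⁻¹ = 1 := by group
          rw [hone]; exact Subgroup.one_mem N
        · intro a b _ _ ha hb
          show g * (a * b) * g⁻¹ ∈ N
          have hmul : g * (a * b) * g⁻¹ = (g * a * g⁻¹) * (g * b * g⁻¹) := by group
          rw [hmul]; exact Subgroup.mul_mem _ ha hb
        · intro a _ ha
          show g * a⁻¹ * g⁻¹ ∈ N
          have hinv : g * a⁻¹ * g⁻¹ = (g * a * g⁻¹)⁻¹ := by group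
          rw [hinv]; exact Subgroup.inv_mem _ ha
      have hXgen := ih j (le_trans (Nat.le_succ k) hj)
      have hYgen := ih j' (by simp only [hj'def]; omega)
      have hnormj' : P j' ≤ Subgroup.normalizer (P j : Set G) := hnormalize j' j hlt
      -- the key claim: all commutators of `P j` with `P j'` lie in `N`
      have key : ∀ y ∈ P j', ∀ x ∈ P j, ⁅x, y⁆ ∈ N := by
        intro y hy
        have hy' : y ∈ Subgroup.closure {x : G | x ∈ P j' ∧ x ∈ deltaStar G k} :=
          hYgen ▸ hy
        refine Subgroup.closure_induction
          (p := fun y _ => ∀ x ∈ P j, ⁅x, y⁆ ∈ N) ?_ ?_ ?_ ?_ hy'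
        · -- base case: b is a δₖ*-commutator in P j'
          intro b hb x hx
          have hx' : x ∈ Subgroup.closure {x : G | x ∈ P j ∧ x ∈ deltaStar G k} :=
            hXgen ▸ hx
          refine Subgroup.closure_induction
            (p := fun x _ => ⁅x, b⁆ ∈ N) ?_ ?_ ?_ ?_ hx'
          · -- innermost base case: both a and b are δₖ*-commutators
            intro a ha
            apply Subgroup.subset_closure
            constructor
            · -- membership in P j
              have hmem : ⁅a, b⁆ = a * (b * a⁻¹ * b⁻¹) := by group
              rw [hmem]
              exact Subgroup.mul_mem _ ha.1
                ((Subgroup.mem_normalizer_iff.mp (hnormj' hb.1) a⁻¹).mp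
                  (Subgroup.inv_mem _ ha.1))
            · -- being a δ_{k+1}*-commutator
              refine ⟨a⁻¹, b⁻¹, ⟨a, ha.2, orderOf a - 1,
                inv_eq_pow_orderOf_sub_one a (orderOf_pos a)⟩,
                ⟨b, hb.2, orderOf b - 1,
                inv_eq_pow_orderOf_sub_one b (orderOf_pos b)⟩, ?_, by group⟩
              rw [orderOf_inv, orderOf_inv]
              obtain ⟨s, hs⟩ := pgroup_orderOf (hp j) (hprime j) ha.1
              obtain ⟨t, ht⟩ := pgroup_orderOf (hp j') (hprime j') hb.1
              rw [hs, ht]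
              exact Nat.Coprime.pow _ _
                ((Nat.coprime_primes (hprime j) (hprime j')).mpr hpe)
          · show ⁅(1 : G), b⁆ ∈ N
            have hone : ⁅(1 : G), b⁆ = 1 := by group
            rw [hone]; exact Subgroup.one_mem N
          · intro x₁ x₂ hx₁ hx₂ ihx₁ ihx₂
            show ⁅x₁ * x₂, b⁆ ∈ N
            have hx₁P : x₁ ∈ P j := hXgen ▸ hx₁
            have hmul : ⁅x₁ * x₂, b⁆ = (x₁ * ⁅x₂, b⁆ * x₁⁻¹) * ⁅x₁, b⁆ := by group
            rw [hmul]
            exact Subgroup.mul_mem _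
              (hstab x₁ (Subgroup.le_normalizer hx₁P) _ ihx₂) ihx₁
          · intro x₀ hx₀ ihx₀
            show ⁅x₀⁻¹, b⁆ ∈ N
            have hx₀P : x₀ ∈ P j := hXgen ▸ hx₀
            have hinv : ⁅x₀⁻¹, b⁆ = x₀⁻¹ * ⁅x₀, b⁆⁻¹ * (x₀⁻¹)⁻¹ := by group
            rw [hinv]
            exact hstab x₀⁻¹ (Subgroup.inv_mem _ (Subgroup.le_normalizer hx₀P)) _
              (Subgroup.inv_mem _ ihx₀)
        · intro x _
          show ⁅x, (1 : G)⁆ ∈ N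
          have hone : ⁅x, (1 : G)⁆ = 1 := by group
          rw [hone]; exact Subgroup.one_mem N
        · intro y₁ y₂ hy₁ hy₂ ih₁ ih₂ x hx
          show ⁅x, y₁ * y₂⁆ ∈ N
          have hy₁P : y₁ ∈ P j' := hYgen ▸ hy₁
          have hmul : ⁅x, y₁ * y₂⁆ = ⁅x, y₁⁆ * (y₁ * ⁅x, y₂⁆ * y₁⁻¹) := by group
          rw [hmul]
          exact Subgroup.mul_mem _ (ih₁ x hx)
            (hstab y₁ (hnormj' hy₁P) _ (ih₂ x hx))
        · intro y₀ hy₀ ih₀ x hx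
          show ⁅x, y₀⁻¹⁆ ∈ N
          have hy₀P : y₀ ∈ P j' := hYgen ▸ hy₀
          have hinv : ⁅x, y₀⁻¹⁆ = y₀⁻¹ * ⁅x, y₀⁆⁻¹ * (y₀⁻¹)⁻¹ := by group
          rw [hinv]
          exact hstab y₀⁻¹ (Subgroup.inv_mem _ (hnormj' hy₀P)) _
            (Subgroup.inv_mem _ (ih₀ x hx))
      refine le_antisymm ?_ hNle
      rw [← hcj]
      exact Subgroup.commutator_le.mpr (fun g₁ h₁ g₂ h₂ => key g₂ h₂ g₁ h₁)
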